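/- If Y = γ₀ + Σ_{r=1}^p γ_r X_r + e with E[e]=0, the random variables e, U, X_1,…,X_p are mutually independent, and the observed variables are X̃_r = φ_r(U)X_r and Ỹ = ψ(U)Y for measurable functions ψ, φ_r with φ_r > 0, then E[Ỹ | X̃_1,…,X̃_p, U] = β₀(U) + Σ_{r=1}^p β_r(U) X̃_r, where β₀(u) = ψ(u)γ₀ and β_r(u) = γ_r ψ(u)/φ_r(u). -/

import Mathlib

open MeasureTheory ProbabilityTheory

/-- CAR model: if `Y = γ₀ + Σ γ_r X_r + e`, with `e, U, X₁,…,X_p` mutually independent,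
`E e = 0`, and one observes `X̃_r = φ_r(U) X_r`, `Ỹ = ψ(U) Y`, then
`E[Ỹ | X̃₁,…,X̃_p, U] = β₀(U) + Σ β_r(U) X̃_r` with `β₀(u) = ψ(u)γ₀`,
`β_r(u) = γ_r ψ(u)/φ_r(u)`. -/
theorem stmt_0 {Ω : Type*} [m0 : MeasurableSpace Ω] (μ : Measure Ω) [IsProbabilityMeasure μ]
    (p : ℕ) (γ₀ : ℝ) (γ : Fin p → ℝ)
    (X : Fin p → Ω → ℝ) (U e : Ω → ℝ)
    (hXmeas : ∀ r, Measurable (X r)) (hUmeas : Measurable U) (hemeas : Measurable e)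
    (ψ : ℝ → ℝ) (φ : Fin p → ℝ → ℝ)
    (hψ : Measurable ψ) (hφ : ∀ r, Measurable (φ r)) (hφpos : ∀ r u, 0 < φ r u)
    (hindep : iIndepFun
      (Fin.cons e (Fin.cons U X : Fin (p + 1) → Ω → ℝ) : Fin (p + 2) → Ω → ℝ) μ)
    (he0 : ∫ ω, e ω ∂μ = 0)
    (Y : Ω → ℝ) (hY : ∀ ω, Y ω = γ₀ + (∑ r, γ r * X r ω) + e ω)
    (Xt : Fin p → Ω → ℝ) (hXt : ∀ r ω, Xt r ω = φ r (U ω) * X r ω)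
    (Yt : Ω → ℝ) (hYt : ∀ ω, Yt ω = ψ (U ω) * Y ω)
    (hint : Integrable Yt μ)
    (hintX : ∀ r, Integrable (fun ω => ψ (U ω) * X r ω) μ)
    (hinte : Integrable (fun ω => ψ (U ω) * e ω) μ)
    (mObs : MeasurableSpace Ω)
    (hmObs : mObs = MeasurableSpace.comap
      (fun ω => ((fun r => Xt r ω : Fin p → ℝ), U ω)) inferInstance) :
    μ[Yt | mObs] =ᵐ[μ]
      fun ω => ψ (U ω) * γ₀ + ∑ r, γ r * ψ (U ω) / φ r (U ω) * Xt r ω := by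
  have hφne : ∀ r u, φ r u ≠ 0 := fun r u => (hφpos r u).ne'
  set Z : Fin (p + 2) → Ω → ℝ := Fin.cons e (Fin.cons U X) with hZdef
  have hZ0 : Z 0 = e := rfl
  have hZ1 : Z (Fin.succ 0) = U := rfl
  have hZX : ∀ r : Fin p, Z (Fin.succ (Fin.succ r)) = X r := fun r => by
    simp [Z]
  have hZmeas : ∀ i, Measurable[m0] (Z i) := by
    intro i
    induction i using Fin.cases with
    | zero => exact hemeas
    | succ j =>
      induction j using Fin.cases with
      | zero => exact hUmeas
      | succ r => simpa [Z] using hXmeas r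
  set mOther : MeasurableSpace Ω :=
    ⨆ i ∈ ({0}ᶜ : Set (Fin (p + 2))), MeasurableSpace.comap (Z i) inferInstance with hmOtherdef
  letI : MeasurableSpace Ω := m0
  have hle : ∀ i, MeasurableSpace.comap (Z i) inferInstance ≤ m0 :=
    fun i => (hZmeas i).comap_le
  have hmOther_le : mOther ≤ m0 := by
    rw [hmOtherdef]; exact iSup₂_le fun i _ => hle i
  have hUm : Measurable[mOther] U := by
    refine Measurable.of_comap_le ?_
    rw [hmOtherdef, ← hZ1]
    exact le_iSup₂ (f := fun i (_ : i ∈ ({0}ᶜ : Set (Fin (p + 2)))) =>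
      MeasurableSpace.comap (Z i) inferInstance) (Fin.succ 0) (Fin.succ_ne_zero 0)
  have hXm : ∀ r, Measurable[mOther] (X r) := by
    intro r
    refine Measurable.of_comap_le ?_
    rw [hmOtherdef, ← hZX r]
    exact le_iSup₂ (f := fun i (_ : i ∈ ({0}ᶜ : Set (Fin (p + 2)))) =>
      MeasurableSpace.comap (Z i) inferInstance) (Fin.succ (Fin.succ r))
      (Fin.succ_ne_zero _)
  -- mObs ≤ mOther and mObs ≤ m0
  have hXtm : ∀ r, Measurable[mOther] (Xt r) := by
    intro r
    have : Xt r = fun ω => φ r (U ω) * X r ω := funext fun ω => hXt r ω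
    rw [this]
    exact ((hφ r).comp hUm).mul (hXm r)
  have hXtm0 : ∀ r, Measurable[m0] (Xt r) := by
    intro r
    have : Xt r = fun ω => φ r (U ω) * X r ω := funext fun ω => hXt r ω
    rw [this]
    exact ((hφ r).comp hUmeas).mul (hXmeas r)
  have hmObs_le : mObs ≤ mOther := by
    rw [hmObs]
    letI : MeasurableSpace Ω := mOther
    refine Measurable.comap_le (m₁ := mOther) (Measurable.prod (m := mOther) ?_ hUm)
    exact measurable_pi_lambda _ fun r => hXtm r
  have hmObs_le0 : mObs ≤ m0 := by
    rw [hmObs]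
    refine Measurable.comap_le (m₁ := m0) (Measurable.prod (m := m0) ?_ hUmeas)
    exact measurable_pi_lambda _ fun r => hXtm0 r
  -- independence of mOther and σ(e)
  have hiI : iIndep (fun i => MeasurableSpace.comap (Z i) inferInstance) μ :=
    (iIndepFun_iff_iIndep _ _ _).mp hindep
  have hIndep0 : Indep mOther (MeasurableSpace.comap e inferInstance) μ := by
    have h := indep_biSup_compl hle hiI ({0}ᶜ : Set (Fin (p + 2)))
    rw [compl_compl] at h
    have hs : (⨆ n ∈ ({0} : Set (Fin (p + 2))), MeasurableSpace.comap (Z n) inferInstance)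
        = MeasurableSpace.comap e inferInstance := by
      rw [iSup_singleton, hZ0]
    rwa [hs] at h
  -- the key vanishing of set integrals
  have hW : ∀ s : Set Ω, MeasurableSet[mObs] s →
      ∫ ω in s, ψ (U ω) * e ω ∂μ = 0 := by
    intro s hs
    have hs' : MeasurableSet[mOther] s := hmObs_le s hs
    have hs0 : MeasurableSet[m0] s := hmObs_le0 s hs
    have hgm : Measurable[mOther] (s.indicator fun ω => ψ (U ω)) :=
      (hψ.comp hUm).indicator hs'
    have hind : IndepFun (s.indicator fun ω => ψ (U ω)) e μ := by
      rw [IndepFun_iff_Indep]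
      exact indep_of_indep_of_le_left hIndep0 hgm.comap_le
    have hgm0 : Measurable[m0] (s.indicator fun ω => ψ (U ω)) :=
      Measurable.indicator (m := m0) (hψ.comp hUmeas) hs0
    have hgm0' : AEStronglyMeasurable (s.indicator fun ω => ψ (U ω)) μ :=
      hgm0.aestronglyMeasurable
    have hem' : AEStronglyMeasurable e μ := hemeas.aestronglyMeasurable
    have hmul := hind.integral_fun_mul_eq_mul_integral hgm0' hem'
    have heq2 : ∫ ω, s.indicator (fun ω => ψ (U ω) * e ω) ω ∂μ
        = ∫ ω in s, ψ (U ω) * e ω ∂μ := integral_indicator hs0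
    have heq : ∫ ω in s, ψ (U ω) * e ω ∂μ
        = ∫ ω, s.indicator (fun ω => ψ (U ω)) ω * e ω ∂μ := by
      rw [← heq2]
      congr 1
      funext ω
      by_cases hω : ω ∈ s <;> simp [hω]
    rw [heq, hmul, he0, mul_zero]
  -- decompose Yt = T + W
  set T : Ω → ℝ :=
    fun ω => ψ (U ω) * γ₀ + ∑ r, γ r * ψ (U ω) / φ r (U ω) * Xt r ω with hTdef
  set W : Ω → ℝ := fun ω => ψ (U ω) * e ω with hWdef
  have hYtTW : Yt = fun ω => T ω + W ω := by
    funext ω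
    have hterm : ∀ r, γ r * ψ (U ω) / φ r (U ω) * Xt r ω = ψ (U ω) * (γ r * X r ω) := by
      intro r
      rw [hXt r ω, ← mul_assoc, div_mul_cancel₀ _ (hφne r (U ω))]
      ring
    simp only [hYt, hY, T, W]
    rw [Finset.sum_congr rfl fun r _ => hterm r, ← Finset.mul_sum]
    ring
  have hTint : Integrable T μ := by
    have : T = fun ω => Yt ω - W ω := by
      funext ω; rw [hYtTW]; ring
    rw [this]
    exact hint.sub hinte
  have hTm : StronglyMeasurable[mObs] T := by
    have hF : Measurable[mObs] (fun ω => ((fun r => Xt r ω : Fin p → ℝ), U ω)) := by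
      rw [hmObs]; exact Measurable.of_comap_le le_rfl
    have hg : Measurable (fun q : (Fin p → ℝ) × ℝ =>
        ψ q.2 * γ₀ + ∑ r, γ r * ψ q.2 / φ r q.2 * q.1 r) := by
      refine ((hψ.comp measurable_snd).mul measurable_const).add ?_
      refine Finset.measurable_sum _ fun r _ => ?_
      exact ((measurable_const.mul (hψ.comp measurable_snd)).div
        ((hφ r).comp measurable_snd)).mul ((measurable_pi_apply r).comp measurable_fst)
    exact (hg.comp hF).stronglyMeasurable
  haveI : SigmaFinite (μ.trim hmObs_le0) := by
    haveI : IsFiniteMeasure (μ.trim hmObs_le0) := isFiniteMeasure_trim _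
    infer_instance
  have hW0 : (0 : Ω → ℝ) =ᵐ[μ] μ[W | mObs] := by
    refine ae_eq_condExp_of_forall_setIntegral_eq hmObs_le0 hinte ?_ ?_ ?_
    · intro s _ _; exact integrableOn_zero
    · intro s hs _
      simp [hW s hs]
    · exact StronglyMeasurable.aestronglyMeasurable stronglyMeasurable_zero
  have h1 : μ[Yt|mObs] =ᵐ[μ] μ[T|mObs] + μ[W|mObs] := by
    rw [hYtTW]
    exact condExp_add hTint hinte mObs
  refine h1.trans ?_
  rw [condExp_of_stronglyMeasurable hmObs_le0 hTm hTint]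
  filter_upwards [hW0] with ω hω
  show T ω + (μ[W|mObs]) ω = T ω
  rw [← hω]
  simp
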